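/- Let E be a normed vector space over ℝ (or ℂ) and let L : E → E be a linear map that is power-bounded, i.e. there is a constant C ≥ 0 such that ‖Lⁿψ‖ ≤ C·‖ψ‖ for all ψ ∈ E and all n ∈ ℕ. Then the kernel of (L − I)² equals the kernel of L − I; that is, every ψ ∈ E with (L − I)((L − I)ψ) = 0 satisfies Lψ = ψ. (In particular, the eigenvalue 1 of L admits no generalized eigenvectors of rank two, so for a transfer operator preserving the L¹ norm the algebraic and geometric multiplicities of the eigenvalue 1 coincide.) -/
import Mathlib


/-- If `L` is a power-bounded linear map on a real normed
vector space `E` (i.e. `‖Lⁿ ψ‖ ≤ C ‖ψ‖` for all `n` and `ψ`), then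
`ker (L - I)² = ker (L - I)`: every `ψ` with `(L - I)((L - I) ψ) = 0`
satisfies `L ψ = ψ`. -/
theorem power_bounded_no_rank_two_generalized_eigenvectors
    {E : Type*} [NormedAddCommGroup E] [NormedSpace ℝ E]
    (L : E →ₗ[ℝ] E) (C : ℝ) (hC : 0 ≤ C)
    (hpb : ∀ (n : ℕ) (ψ : E), ‖(L ^ n) ψ‖ ≤ C * ‖ψ‖)
    (ψ : E) (hψ : (L - (LinearMap.id : E →ₗ[ℝ] E))
      ((L - (LinearMap.id : E →ₗ[ℝ] E)) ψ) = 0) :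
    L ψ = ψ := by
  set φ : E := L ψ - ψ with hφ
  have hLφ : L φ = φ := by
    have := hψ
    simp [LinearMap.sub_apply, LinearMap.id_apply, sub_eq_zero] at this
    simpa [hφ] using this
  have hpow : ∀ n : ℕ, (L ^ n) ψ = ψ + (n : ℝ) • φ := by
    intro n
    induction n with
    | zero => simp
    | succ n ih =>
      have : (L ^ (n + 1)) ψ = L ((L ^ n) ψ) := by
        rw [pow_succ']; rfl
      rw [this, ih, map_add, map_smul, hLφ]
      have : L ψ = ψ + φ := by rw [hφ]; abel
      rw [this]
      push_cast
      rw [add_smul, one_smul]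
      abel
  have hbound : ∀ n : ℕ, (n : ℝ) * ‖φ‖ ≤ (C + 1) * ‖ψ‖ := by
    intro n
    have h1 := hpb n ψ
    rw [hpow n] at h1
    have h2 : ‖(n : ℝ) • φ‖ - ‖ψ‖ ≤ ‖ψ + (n : ℝ) • φ‖ := by
      have h := norm_sub_norm_le ((n : ℝ) • φ) (ψ + (n : ℝ) • φ)
      have h' : (n : ℝ) • φ - (ψ + (n : ℝ) • φ) = -ψ := by abel
      rw [h', norm_neg] at h
      linarith
    have h3 : ‖(n : ℝ) • φ‖ = (n : ℝ) * ‖φ‖ := by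
      rw [norm_smul]; simp
    nlinarith [norm_nonneg ψ]
  have hzero : φ = 0 := by
    by_contra hne
    have hpos : 0 < ‖φ‖ := norm_pos_iff.mpr hne
    obtain ⟨n, hn⟩ := exists_nat_gt (((C + 1) * ‖ψ‖) / ‖φ‖)
    have := hbound n
    have : (n : ℝ) ≤ ((C + 1) * ‖ψ‖) / ‖φ‖ := (le_div_iff₀ hpos).mpr this
    linarith
  have h : L ψ - ψ = 0 := hzero
  rw [sub_eq_zero] at h
  exact h
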